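/- Let (A x ≤ b) ∪ (l ≤ D x ≤ u) be a split system with A ∈ ℚ^{m₁×n}, D ∈ ℚ^{m₂×n}, and n = n₁ + n₂. Then the full system (A x ≤ b) ∪ (D x ≤ u) has a mixed solution if and only if the bounded part D x ≤ u alone has a mixed solution. -/

import Mathlib

open Matrix

/-- Direction `h ≠ 0` is bounded in the constraint system `A x ≤ b`: there exist
`l, u ∈ ℚ` such that `A x ≤ b` implies `hᵀ x ≤ u` and `−hᵀ x ≤ −l`. -/
def Bounded {ι : Type} [Fintype ι] {n : ℕ} (A : Matrix ι (Fin n) ℚ) (b : ι → ℚ)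
    (h : Fin n → ℚ) : Prop :=
  ∃ l u : ℚ, (∀ x : Fin n → ℚ, A.mulVec x ≤ b → h ⬝ᵥ x ≤ u) ∧
    (∀ x : Fin n → ℚ, A.mulVec x ≤ b → (-h) ⬝ᵥ x ≤ -l)

/-- `(A x ≤ b) ∪ (l ≤ D x ≤ u)` is a split system: all rows are nonzero,
the part `D x ≤ u` is double-bounded, all nonzero directions are unbounded in
`A x ≤ b`, and every row of `A` is unbounded in the combined system. -/
def SplitSystem {m₁ m₂ n : ℕ} (A : Matrix (Fin m₁) (Fin n) ℚ) (b : Fin m₁ → ℚ)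
    (D : Matrix (Fin m₂) (Fin n) ℚ) (u : Fin m₂ → ℚ) : Prop :=
  (∀ i : Fin m₁, A i ≠ 0) ∧ (∀ i : Fin m₂, D i ≠ 0) ∧
  (∃ l : Fin m₂ → ℚ, ∀ x : Fin n → ℚ, D.mulVec x ≤ u → ∀ i : Fin m₂, l i ≤ D.mulVec x i) ∧
  (∀ h : Fin n → ℚ, h ≠ 0 → ¬ Bounded A b h) ∧
  (∀ i : Fin m₁, ¬ Bounded (Matrix.fromRows A D) (Sum.elim b u) (A i))


lemma exists_x0 {ι : Type} [Fintype ι] (α β : ι → ℚ)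
    (h0 : ∀ i, α i = 0 → 0 ≤ β i)
    (hpn : ∀ p q, 0 < α p → α q < 0 → β q / α q ≤ β p / α p) :
    ∃ x : ℚ, ∀ i, α i * x ≤ β i := by
  classical
  by_cases hSne : (Finset.univ.filter (fun k => α k < 0)).Nonempty
  · obtain ⟨x, hx⟩ : ∃ x : ℚ, ∀ j, α j < 0 → β j / α j ≤ x ∧
        (∀ i, 0 < α i → x ≤ β i / α i) := by
      refine ⟨(Finset.univ.filter (fun k => α k < 0)).sup' hSne (fun k => β k / α k),
        fun j hj => ⟨Finset.le_sup' (f := fun k => β k / α k)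
          (Finset.mem_filter.2 ⟨Finset.mem_univ _, hj⟩), fun i hi => ?_⟩⟩
      exact Finset.sup'_le _ _ (fun q hq => hpn i q hi (Finset.mem_filter.1 hq).2)
    refine ⟨x, fun i => ?_⟩
    rcases lt_trichotomy (α i) 0 with h|h|h
    · have h1 := (hx i h).1
      have hc : α i * (β i / α i) = β i := mul_div_cancel₀ _ (ne_of_lt h)
      nlinarith
    · simpa [h] using h0 i h
    · obtain ⟨j, hj⟩ := hSne
      have hj' := (Finset.mem_filter.1 hj).2
      have h2 := (hx j hj').2 i h
      have hc : α i * (β i / α i) = β i := mul_div_cancel₀ _ (ne_of_gt h)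
      nlinarith
  · by_cases hTne : (Finset.univ.filter (fun k => 0 < α k)).Nonempty
    · obtain ⟨x, hx⟩ : ∃ x : ℚ, ∀ i, 0 < α i → x ≤ β i / α i :=
        ⟨(Finset.univ.filter (fun k => 0 < α k)).inf' hTne (fun k => β k / α k),
          fun i hi => Finset.inf'_le (f := fun k => β k / α k)
            (Finset.mem_filter.2 ⟨Finset.mem_univ _, hi⟩)⟩
      refine ⟨x, fun i => ?_⟩
      rcases lt_trichotomy (α i) 0 with h|h|h
      · exact absurd ⟨i, Finset.mem_filter.2 ⟨Finset.mem_univ _, h⟩⟩ hSne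
      · simpa [h] using h0 i h
      · have h2 := hx i h
        have hc : α i * (β i / α i) = β i := mul_div_cancel₀ _ (ne_of_gt h)
        nlinarith
    · refine ⟨0, fun i => ?_⟩
      have h1 : ¬ α i < 0 := fun h => hSne ⟨i, Finset.mem_filter.2 ⟨Finset.mem_univ _, h⟩⟩
      have h2 : ¬ 0 < α i := fun h => hTne ⟨i, Finset.mem_filter.2 ⟨Finset.mem_univ _, h⟩⟩
      have h3 : α i = 0 := le_antisymm (not_lt.1 h2) (not_lt.1 h1)
      simpa [h3] using h0 i h3

def comb {ι : Type} (α w : ι → ℚ) : ι ⊕ ι × ι → ℚ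
  | Sum.inl i => if α i = 0 then w i else 0
  | Sum.inr (p, q) => if 0 < α p ∧ α q < 0 then α p * w q - α q * w p else 0

theorem farkasAux (n : ℕ) : ∀ {ι : Type} [Fintype ι] (a : ι → Fin n → ℚ) (c : ι → ℚ),
    (∃ x : Fin n → ℚ, ∀ i, a i ⬝ᵥ x ≤ c i) ∨
    (∃ l : ι → ℚ, (∀ i, 0 ≤ l i) ∧ (∀ j, ∑ i, l i * a i j = 0) ∧ ∑ i, l i * c i < 0) := by
  induction n with
  | zero =>
    intro ι _ a c
    classical
    by_cases h : ∀ i, 0 ≤ c i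
    · exact Or.inl ⟨0, fun i => by simpa [dotProduct] using h i⟩
    · push_neg at h
      obtain ⟨i₀, hi₀⟩ := h
      refine Or.inr ⟨fun i => if i = i₀ then 1 else 0,
        fun i => by dsimp only; split <;> norm_num, fun j => j.elim0, ?_⟩
      simpa [ite_mul] using hi₀
  | succ n ih =>
    intro ι _ a c
    classical
    set α : ι → ℚ := fun i => a i 0 with hα
    rcases ih (fun r j => comb α (fun i => a i j.succ) r) (comb α c) with
      ⟨x', hx'⟩ | ⟨l', hl0, hlA, hlc⟩
    · -- feasible case
      have h0 : ∀ i, α i = 0 → 0 ≤ c i - ∑ j, a i j.succ * x' j := by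
        intro i hi
        have := hx' (Sum.inl i)
        simp only [comb, hi, if_true, dotProduct] at this
        linarith
      have hpn : ∀ p q, 0 < α p → α q < 0 →
          (c q - ∑ j, a q j.succ * x' j) / α q ≤ (c p - ∑ j, a p j.succ * x' j) / α p := by
        intro p q hp hq
        have hkey := hx' (Sum.inr (p, q))
        simp only [comb, hp, hq, and_self, if_true, dotProduct] at hkey
        have hexp : ∑ j, (α p * a q j.succ - α q * a p j.succ) * x' j
            = α p * ∑ j, a q j.succ * x' j - α q * ∑ j, a p j.succ * x' j := by
          rw [show (∑ j, (α p * a q j.succ - α q * a p j.succ) * x' j)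
              = ∑ j, (α p * (a q j.succ * x' j) - α q * (a p j.succ * x' j)) from
            Finset.sum_congr rfl (fun j _ => by ring)]
          rw [Finset.sum_sub_distrib, ← Finset.mul_sum, ← Finset.mul_sum]
        rw [hexp] at hkey
        rw [show (c q - ∑ j, a q j.succ * x' j) / α q
            = (-(c q - ∑ j, a q j.succ * x' j)) / (-α q) from (neg_div_neg_eq _ _).symm]
        rw [div_le_div_iff₀ (by linarith) hp]
        nlinarith
      obtain ⟨x₀, hx₀⟩ := exists_x0 α (fun i => c i - ∑ j, a i j.succ * x' j) h0 hpn
      refine Or.inl ⟨Fin.cons x₀ x', fun i => ?_⟩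
      have hdot : a i ⬝ᵥ Fin.cons x₀ x' = α i * x₀ + ∑ j, a i j.succ * x' j := by
        simp [dotProduct, Fin.sum_univ_succ, hα]
      rw [hdot]
      linarith [hx₀ i]
    · -- certificate case
      set l : ι → ℚ := fun i =>
        (if α i = 0 then l' (Sum.inl i) else 0)
        + (∑ q, (if 0 < α i ∧ α q < 0 then l' (Sum.inr (i, q)) * (-(α q)) else 0))
        + (∑ p, (if 0 < α p ∧ α i < 0 then l' (Sum.inr (p, i)) * (α p) else 0)) with hl
      have hlnn : ∀ i, 0 ≤ l i := by
        intro i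
        simp only [hl]
        refine add_nonneg (add_nonneg ?_ ?_) ?_
        · split_ifs
          · exact hl0 _
          · exact le_refl 0
        · refine Finset.sum_nonneg (fun q _ => ?_)
          split_ifs with h
          · exact mul_nonneg (hl0 _) (by linarith [h.2])
          · exact le_refl 0
        · refine Finset.sum_nonneg (fun p _ => ?_)
          split_ifs with h
          · exact mul_nonneg (hl0 _) (le_of_lt h.1)
          · exact le_refl 0
      have claim : ∀ w : ι → ℚ, ∑ i, l i * w i = ∑ r, l' r * comb α w r := by
        intro w
        have hterm : ∀ i, l i * w i
            = (if α i = 0 then l' (Sum.inl i) else 0) * w i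
              + (∑ q, (if 0 < α i ∧ α q < 0 then l' (Sum.inr (i, q)) * (-(α q)) else 0) * w i)
              + (∑ p, (if 0 < α p ∧ α i < 0 then l' (Sum.inr (p, i)) * (α p) else 0) * w i) := by
          intro i
          simp only [hl, add_mul, Finset.sum_mul]
        rw [Finset.sum_congr rfl (fun i _ => hterm i)]
        rw [Finset.sum_add_distrib, Finset.sum_add_distrib]
        rw [Fintype.sum_sum_type, Fintype.sum_prod_type]
        have e1 : ∀ i, (if α i = 0 then l' (Sum.inl i) else 0) * w i
            = l' (Sum.inl i) * comb α w (Sum.inl i) := by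
          intro i
          by_cases h : α i = 0 <;> simp [comb, h]
        have hswap : (∑ i, ∑ p, (if 0 < α p ∧ α i < 0 then l' (Sum.inr (p, i)) * (α p) else 0) * w i)
            = ∑ p, ∑ q, (if 0 < α p ∧ α q < 0 then l' (Sum.inr (p, q)) * (α p) else 0) * w q :=
          Finset.sum_comm
        rw [Finset.sum_congr rfl (fun i _ => e1 i), hswap]
        rw [add_assoc, ← Finset.sum_add_distrib]
        congr 1
        refine Finset.sum_congr rfl (fun p _ => ?_)
        rw [← Finset.sum_add_distrib]
        refine Finset.sum_congr rfl (fun q _ => ?_)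
        by_cases h : 0 < α p ∧ α q < 0 <;> simp [comb, h] <;> ring
      refine Or.inr ⟨l, hlnn, ?_, ?_⟩
      · intro j
        refine Fin.cases ?_ ?_ j
        · have := claim α
          rw [this]
          have : ∀ r : ι ⊕ ι × ι, l' r * comb α α r = 0 := by
            rintro (i | ⟨p, q⟩)
            · by_cases h : α i = 0 <;> simp [comb, h]
            · by_cases h : 0 < α p ∧ α q < 0
              · simp only [comb, if_pos h]; ring
              · simp [comb, h]
          rw [Finset.sum_congr rfl (fun r _ => this r), Finset.sum_const_zero]
        · intro j
          have := claim (fun i => a i j.succ)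
          rw [this]
          exact hlA j
      · rw [claim c]
        exact hlc


set_option maxHeartbeats 1000000 in
/-- Double-Bounded Reduction: a split system `(A x ≤ b) ∪ (l ≤ D x ≤ u)` over
`n = n₁ + n₂` variables (the last `n₂` being integer) has a mixed solution
iff its bounded part `D x ≤ u` alone has a mixed solution. -/
theorem double_bounded_reduction {m₁ m₂ n₁ n₂ : ℕ}
    (A : Matrix (Fin m₁) (Fin (n₁ + n₂)) ℚ) (b : Fin m₁ → ℚ)
    (D : Matrix (Fin m₂) (Fin (n₁ + n₂)) ℚ) (u : Fin m₂ → ℚ)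
    (hsplit : SplitSystem A b D u) :
    (∃ s : Fin (n₁ + n₂) → ℚ, A.mulVec s ≤ b ∧ D.mulVec s ≤ u ∧
        ∀ j : Fin (n₁ + n₂), n₁ ≤ (j : ℕ) → ∃ z : ℤ, s j = (z : ℚ)) ↔
    (∃ s : Fin (n₁ + n₂) → ℚ, D.mulVec s ≤ u ∧
        ∀ j : Fin (n₁ + n₂), n₁ ≤ (j : ℕ) → ∃ z : ℤ, s j = (z : ℚ)) := by
  classical
  constructor
  · rintro ⟨s, _, hD, hint⟩
    exact ⟨s, hD, hint⟩
  · rintro ⟨s, hDs, hint⟩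
    obtain ⟨-, -, ⟨L, hL⟩, -, hub⟩ := hsplit
    -- Step 1: recession directions
    have hdir : ∀ i₀ : Fin m₁, ∃ y : Fin (n₁ + n₂) → ℚ,
        (∀ i, A i ⬝ᵥ y ≤ 0) ∧ (∀ q, D q ⬝ᵥ y = 0) ∧ A i₀ ⬝ᵥ y ≤ -1 := by
      intro i₀
      set av : ((Fin m₁ ⊕ (Fin m₂ ⊕ Fin m₂)) ⊕ Unit) → Fin (n₁ + n₂) → ℚ :=
        Sum.elim (Sum.elim A (Sum.elim D (fun q => -D q))) (fun _ => A i₀) with hav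
      set cv : ((Fin m₁ ⊕ (Fin m₂ ⊕ Fin m₂)) ⊕ Unit) → ℚ :=
        Sum.elim (fun _ => 0) (fun _ => -1) with hcv
      rcases farkasAux _ av cv with ⟨y, hy⟩ | ⟨lam, hlnn, hlA, hlc⟩
      · refine ⟨y, fun i => by exact hy (Sum.inl (Sum.inl i)),
          fun q => ?_, by exact hy (Sum.inr ())⟩
        have h1 : D q ⬝ᵥ y ≤ 0 := by exact hy (Sum.inl (Sum.inr (Sum.inl q)))
        have h2 : (-D q) ⬝ᵥ y ≤ 0 := by exact hy (Sum.inl (Sum.inr (Sum.inr q)))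
        rw [neg_dotProduct] at h2
        linarith
      · exfalso
        apply hub i₀
        -- σ > 0
        have hσ : 0 < lam (Sum.inr ()) := by
          have hsum : ∑ r, lam r * cv r = -(lam (Sum.inr ())) := by
            simp [hcv, Fintype.sum_sum_type]
          rw [hsum] at hlc
          linarith
        -- dot identity
        have hdotzero : ∀ x : Fin (n₁ + n₂) → ℚ, ∑ r, lam r * (av r ⬝ᵥ x) = 0 := by
          intro x
          have hh : ∑ r, lam r * (av r ⬝ᵥ x) = ∑ j, (∑ r, lam r * av r j) * x j := by
            simp only [dotProduct, Finset.mul_sum]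
            rw [Finset.sum_comm]
            refine Finset.sum_congr rfl fun j _ => ?_
            rw [Finset.sum_mul]
            exact Finset.sum_congr rfl fun r _ => by ring
          rw [hh]
          simp [hlA]
        set K : ℚ := (∑ i, lam (Sum.inl (Sum.inl i)) * b i)
          + (∑ q, lam (Sum.inl (Sum.inr (Sum.inl q))) * u q)
          + (∑ q, lam (Sum.inl (Sum.inr (Sum.inr q))) * (-(L q))) with hK
        have hbnd : ∀ x : Fin (n₁ + n₂) → ℚ,
            (Matrix.fromRows A D).mulVec x ≤ Sum.elim b u →
            -K / lam (Sum.inr ()) ≤ A i₀ ⬝ᵥ x := by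
          intro x hx
          have hAx : ∀ i, A i ⬝ᵥ x ≤ b i := by
            intro i
            have := hx (Sum.inl i)
            simpa [Matrix.fromRows_mulVec, Matrix.mulVec] using this
          have hDx : ∀ q, D q ⬝ᵥ x ≤ u q := by
            intro q
            have := hx (Sum.inr q)
            simpa [Matrix.fromRows_mulVec, Matrix.mulVec] using this
          have hLx : ∀ q, L q ≤ D q ⬝ᵥ x := by
            have := hL x (fun q => hDx q)
            exact this
          have hsplitsum : ∑ r, lam r * (av r ⬝ᵥ x)
              = (∑ i, lam (Sum.inl (Sum.inl i)) * (A i ⬝ᵥ x))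
              + (∑ q, lam (Sum.inl (Sum.inr (Sum.inl q))) * (D q ⬝ᵥ x))
              + (∑ q, lam (Sum.inl (Sum.inr (Sum.inr q))) * (-(D q ⬝ᵥ x)))
              + lam (Sum.inr ()) * (A i₀ ⬝ᵥ x) := by
            simp [hav, Fintype.sum_sum_type, neg_dotProduct, add_assoc, Sum.elim]
          have h1 : ∑ i, lam (Sum.inl (Sum.inl i)) * (A i ⬝ᵥ x)
              ≤ ∑ i, lam (Sum.inl (Sum.inl i)) * b i :=
            Finset.sum_le_sum fun i _ => mul_le_mul_of_nonneg_left (hAx i) (hlnn _)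
          have h2 : ∑ q, lam (Sum.inl (Sum.inr (Sum.inl q))) * (D q ⬝ᵥ x)
              ≤ ∑ q, lam (Sum.inl (Sum.inr (Sum.inl q))) * u q :=
            Finset.sum_le_sum fun q _ => mul_le_mul_of_nonneg_left (hDx q) (hlnn _)
          have h3 : ∑ q, lam (Sum.inl (Sum.inr (Sum.inr q))) * (-(D q ⬝ᵥ x))
              ≤ ∑ q, lam (Sum.inl (Sum.inr (Sum.inr q))) * (-(L q)) :=
            Finset.sum_le_sum fun q _ =>
              mul_le_mul_of_nonneg_left (neg_le_neg (hLx q)) (hlnn _)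
          have hz := hdotzero x
          rw [hsplitsum] at hz
          rw [div_le_iff₀ hσ]
          nlinarith
        exact ⟨-K / lam (Sum.inr ()), b i₀,
          fun x hx => by
            have := hx (Sum.inl i₀)
            simpa [Matrix.fromRows_mulVec, Matrix.mulVec] using this,
          fun x hx => by
            rw [neg_dotProduct]
            have := hbnd x hx
            linarith⟩
    choose Y hY1 hY2 hY3 using hdir
    set y : Fin (n₁ + n₂) → ℚ := fun j => ∑ i, Y i j with hy
    have hdoty : ∀ v : Fin (n₁ + n₂) → ℚ, v ⬝ᵥ y = ∑ i, v ⬝ᵥ Y i := by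
      intro v
      simp only [dotProduct, hy, Finset.mul_sum]
      exact Finset.sum_comm
    have hAy : ∀ i, A i ⬝ᵥ y ≤ -1 := by
      intro i
      rw [hdoty]
      have : ∑ k, A i ⬝ᵥ Y k ≤ ∑ k, (if k = i then (-1 : ℚ) else 0) := by
        refine Finset.sum_le_sum fun k _ => ?_
        split_ifs with h
        · subst h; exact hY3 k
        · exact hY1 k i
      simpa [Finset.sum_ite_eq'] using this
    have hDy : ∀ q, D q ⬝ᵥ y = 0 := by
      intro q
      rw [hdoty]
      simp [hY2]
    -- Step 3: scale to integer vector
    set N : ℕ := ∏ j, (y j).den with hN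
    have hN1 : 1 ≤ N := Finset.one_le_prod' fun j _ => (y j).pos
    have hNy : ∀ j, ∃ z : ℤ, (N : ℚ) * y j = (z : ℚ) := by
      intro j
      obtain ⟨k, hk⟩ := Finset.dvd_prod_of_mem (fun j => (y j).den) (Finset.mem_univ j)
      refine ⟨(k : ℤ) * (y j).num, ?_⟩
      have hden : ((y j).den : ℚ) ≠ 0 := by exact_mod_cast (y j).den_ne_zero
      have hq := Rat.num_div_den (y j)
      rw [div_eq_iff hden] at hq
      rw [← hN] at hk
      rw [hk]
      push_cast
      linear_combination (-(k : ℚ)) * hq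
    -- Step 4: choose t
    obtain ⟨t, ht⟩ := exists_nat_ge (∑ i, max (A i ⬝ᵥ s - b i) 0)
    have hts : ∀ i, A i ⬝ᵥ s - b i ≤ (t : ℚ) := by
      intro i
      have h1 : max (A i ⬝ᵥ s - b i) 0 ≤ ∑ i, max (A i ⬝ᵥ s - b i) 0 :=
        Finset.single_le_sum (f := fun i => max (A i ⬝ᵥ s - b i) 0)
          (fun i _ => le_max_right _ _) (Finset.mem_univ i)
      linarith [le_max_left (A i ⬝ᵥ s - b i) 0]
    -- Step 5: final solution
    refine ⟨fun j => s j + ((t * N : ℕ) : ℚ) * y j, ?_, ?_, ?_⟩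
    · intro i
      have hexp : A i ⬝ᵥ (fun j => s j + ((t * N : ℕ) : ℚ) * y j)
          = A i ⬝ᵥ s + ((t * N : ℕ) : ℚ) * (A i ⬝ᵥ y) := by
        simp only [dotProduct, Finset.mul_sum, ← Finset.sum_add_distrib]
        exact Finset.sum_congr rfl fun j _ => by ring
      show A i ⬝ᵥ (fun j => s j + ((t * N : ℕ) : ℚ) * y j) ≤ b i
      rw [hexp]
      have h1 : A i ⬝ᵥ y ≤ -1 := hAy i
      have h2 : A i ⬝ᵥ s - b i ≤ (t : ℚ) := hts i
      have h3 : (1 : ℚ) ≤ (N : ℚ) := by exact_mod_cast hN1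
      have h4 : (0 : ℚ) ≤ (t : ℚ) := Nat.cast_nonneg t
      have h5 : ((t * N : ℕ) : ℚ) = (t : ℚ) * (N : ℚ) := by push_cast; ring
      rw [h5]
      nlinarith
    · intro q
      have hexp : D q ⬝ᵥ (fun j => s j + ((t * N : ℕ) : ℚ) * y j)
          = D q ⬝ᵥ s + ((t * N : ℕ) : ℚ) * (D q ⬝ᵥ y) := by
        simp only [dotProduct, Finset.mul_sum, ← Finset.sum_add_distrib]
        exact Finset.sum_congr rfl fun j _ => by ring
      show D q ⬝ᵥ (fun j => s j + ((t * N : ℕ) : ℚ) * y j) ≤ u q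
      rw [hexp, hDy q]
      simpa [Matrix.mulVec] using hDs q
    · intro j hj
      obtain ⟨zs, hzs⟩ := hint j hj
      obtain ⟨zy, hzy⟩ := hNy j
      refine ⟨zs + (t : ℤ) * zy, ?_⟩
      show s j + ((t * N : ℕ) : ℚ) * y j = ((zs + (t : ℤ) * zy : ℤ) : ℚ)
      have : ((t * N : ℕ) : ℚ) * y j = (t : ℚ) * ((N : ℚ) * y j) := by push_cast; ring
      rw [this, hzy, hzs]
      push_cast
      ring
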